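/- arXiv:2510.25292 — 2 statements merged into one kernel-verified Lean document; each statement's English description precedes it below -/
import Mathlib

section
/- Let A ∈ {0,1}^{n×n} and let l, r, p₁,…,p_q > 1 be integers with n = l·p₁⋯p_q·r. Then A admits all of the factorizations (l, p₁p₂⋯p_q r), (p₁l, p₂⋯p_q r), …, (p₁p₂⋯p_q l, r) simultaneously if and only if A admits an (l, p₁, p₂, …, p_q, r) factorization. -/
namespace KronPaper

/-- Kronecker product of square binary (Bool-valued) matrices. -/
def kron {m n : ℕ} (A : Matrix (Fin m) (Fin m) Bool) (B : Matrix (Fin n) (Fin n) Bool) :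
    Matrix (Fin (m * n)) (Fin (m * n)) Bool :=
  Matrix.of fun i j => by
    have hn : 0 < n := by
      rcases Nat.eq_zero_or_pos n with h | h
      · exact absurd i.isLt (by simp [h])
      · exact h
    exact
      A ⟨i.val / n, Nat.div_lt_of_lt_mul (lt_of_lt_of_eq i.isLt (mul_comm m n))⟩
        ⟨j.val / n, Nat.div_lt_of_lt_mul (lt_of_lt_of_eq j.isLt (mul_comm m n))⟩
      && B ⟨i.val % n, Nat.mod_lt _ hn⟩ ⟨j.val % n, Nat.mod_lt _ hn⟩

/-- Cast a square matrix along an equality of sizes. -/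
def castK {m n : ℕ} (h : m = n) (M : Matrix (Fin m) (Fin m) Bool) :
    Matrix (Fin n) (Fin n) Bool :=
  Matrix.reindex (finCongr h) (finCongr h) M

/-- Iterated Kronecker product of a list of square binary matrices. -/
def kronList : (ns : List ℕ) →
    ((i : Fin ns.length) → Matrix (Fin (ns.get i)) (Fin (ns.get i)) Bool) →
    Matrix (Fin ns.prod) (Fin ns.prod) Bool
  | [], _ => Matrix.of fun _ _ => true
  | _ :: ns, F => kron (F ⟨0, Nat.succ_pos _⟩) (kronList ns fun i => F i.succ)


/-- Square binary matrices of size `n`. -/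
abbrev BMat (n : ℕ) := Matrix (Fin n) (Fin n) Bool

lemma ecg {n : ℕ} (A : BMat n) {i j i' j' : ℕ} (hi : i < n) (hj : j < n)
    (hi' : i' < n) (hj' : j' < n) (ei : i = i') (ej : j = j') :
    A ⟨i, hi⟩ ⟨j, hj⟩ = A ⟨i', hi'⟩ ⟨j', hj'⟩ := by subst ei; subst ej; rfl

lemma castK_apply {m n : ℕ} (e : m = n) (M : BMat m) (i j : Fin n) :
    castK e M i j = M ⟨i.1, e ▸ i.2⟩ ⟨j.1, e ▸ j.2⟩ := by
  subst e; rfl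

lemma castK_eq_self {n : ℕ} (e : n = n) (M : BMat n) : castK e M = M := by
  ext i j; rw [castK_apply]

lemma castK_castK {m n : ℕ} (e : m = n) (M : BMat m) :
    castK e.symm (castK e M) = M := by
  subst e; rw [castK_eq_self, castK_eq_self]

lemma kron_apply {m n : ℕ} (A : BMat m) (B : BMat n) (i j : ℕ)
    (hi : i < m * n) (hj : j < m * n)
    (h1 : i / n < m) (h2 : j / n < m) (h3 : i % n < n) (h4 : j % n < n) :
    kron A B ⟨i, hi⟩ ⟨j, hj⟩ = (A ⟨i / n, h1⟩ ⟨j / n, h2⟩ && B ⟨i % n, h3⟩ ⟨j % n, h4⟩) := rfl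

/-- Entrywise characterization of a Kronecker factorization. -/
def IsKron {N m n : ℕ} (A : BMat N) (B : BMat m) (C : BMat n) : Prop :=
  ∀ (i₁ j₁ i₂ j₂ : ℕ) (h₁ : i₁ < m) (h₂ : j₁ < m) (h₃ : i₂ < n) (h₄ : j₂ < n)
    (hI : i₁ * n + i₂ < N) (hJ : j₁ * n + j₂ < N),
    A ⟨i₁ * n + i₂, hI⟩ ⟨j₁ * n + j₂, hJ⟩ = (B ⟨i₁, h₁⟩ ⟨j₁, h₂⟩ && C ⟨i₂, h₃⟩ ⟨j₂, h₄⟩)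


lemma isKron_of_eq {N m n : ℕ} (hn : 0 < n) {A : BMat N} {B : BMat m} {C : BMat n}
    (hN : m * n = N) (h : A = castK hN (kron B C)) : IsKron A B C := by
  subst h
  intro i₁ j₁ i₂ j₂ h₁ h₂ h₃ h₄ hI hJ
  have eI : (i₁ * n + i₂) / n = i₁ := by
    rw [Nat.add_comm, Nat.add_mul_div_right _ _ hn, Nat.div_eq_of_lt h₃, Nat.zero_add]
  have eJ : (j₁ * n + j₂) / n = j₁ := by
    rw [Nat.add_comm, Nat.add_mul_div_right _ _ hn, Nat.div_eq_of_lt h₄, Nat.zero_add]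
  have eI2 : (i₁ * n + i₂) % n = i₂ := by
    rw [Nat.add_comm, Nat.add_mul_mod_self_right, Nat.mod_eq_of_lt h₃]
  have eJ2 : (j₁ * n + j₂) % n = j₂ := by
    rw [Nat.add_comm, Nat.add_mul_mod_self_right, Nat.mod_eq_of_lt h₄]
  rw [castK_apply]
  rw [kron_apply B C _ _ (hN ▸ hI) (hN ▸ hJ) (by rw [eI]; exact h₁) (by rw [eJ]; exact h₂) (by rw [eI2]; exact h₃) (by rw [eJ2]; exact h₄)]
  congr 1
  · exact ecg B _ _ _ _ eI eJ
  · exact ecg C _ _ _ _ eI2 eJ2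

lemma eq_kron_of_isKron {N m n : ℕ} (hn : 0 < n) {A : BMat N} {B : BMat m} {C : BMat n}
    (hN : m * n = N) (h : IsKron A B C) : A = castK hN (kron B C) := by
  ext i j
  rw [castK_apply]
  have hi' : (i : ℕ) < m * n := hN ▸ i.2
  have hj' : (j : ℕ) < m * n := hN ▸ j.2
  have d1 : (i : ℕ) / n < m := Nat.div_lt_of_lt_mul (by rwa [mul_comm])
  have d2 : (j : ℕ) / n < m := Nat.div_lt_of_lt_mul (by rwa [mul_comm])
  have m1 : (i : ℕ) % n < n := Nat.mod_lt _ hn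
  have m2 : (j : ℕ) % n < n := Nat.mod_lt _ hn
  rw [kron_apply B C _ _ hi' hj' d1 d2 m1 m2]
  have e1 : (i : ℕ) / n * n + (i : ℕ) % n = (i : ℕ) := Nat.div_add_mod' _ _
  have e2 : (j : ℕ) / n * n + (j : ℕ) % n = (j : ℕ) := Nat.div_add_mod' _ _
  have hIdx : (i : ℕ) / n * n + (i : ℕ) % n < N := by rw [e1]; exact i.2
  have hJdx : (j : ℕ) / n * n + (j : ℕ) % n < N := by rw [e2]; exact j.2
  rw [← h _ _ _ _ d1 d2 m1 m2 hIdx hJdx]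
  exact ecg A i.2 j.2 hIdx hJdx e1.symm e2.symm
lemma isKron_castA {N N' m n : ℕ} (e : N = N') {A : BMat N} {B : BMat m} {C : BMat n}
    (h : IsKron A B C) : IsKron (castK e A) B C := by
  intro i₁ j₁ i₂ j₂ h₁ h₂ h₃ h₄ hI hJ
  rw [castK_apply]
  exact h i₁ j₁ i₂ j₂ h₁ h₂ h₃ h₄ _ _

lemma isKron_castB {N m m' n : ℕ} (e : m = m') {A : BMat N} {B : BMat m} {C : BMat n}
    (h : IsKron A B C) : IsKron A (castK e B) C := by
  subst e; rwa [castK_eq_self]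

lemma isKron_castC {N m n n' : ℕ} (e : n = n') {A : BMat N} {B : BMat m} {C : BMat n}
    (h : IsKron A B C) : IsKron A B (castK e C) := by
  subst e; rwa [castK_eq_self]

lemma isKron_one_left {N : ℕ} (A : BMat N) :
    IsKron A (Matrix.of fun _ _ => true : BMat 1) A := by
  intro i₁ j₁ i₂ j₂ h₁ h₂ h₃ h₄ hI hJ
  have e1 : i₁ = 0 := by omega
  have e2 : j₁ = 0 := by omega
  subst e1; subst e2
  simp only [Matrix.of_apply, Bool.true_and]
  exact ecg A _ _ h₃ h₄ (by omega) (by omega)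

lemma isKron_one_right {N : ℕ} (A : BMat N) :
    IsKron A A (Matrix.of fun _ _ => true : BMat 1) := by
  intro i₁ j₁ i₂ j₂ h₁ h₂ h₃ h₄ hI hJ
  have e1 : i₂ = 0 := by omega
  have e2 : j₂ = 0 := by omega
  subst e1; subst e2
  simp only [Matrix.of_apply, Bool.and_true]
  exact ecg A _ _ h₁ h₂ (by omega) (by omega)
lemma isKron_assoc {a bc b c : ℕ} (hb : 0 < b) (hc : 0 < c)
    (X : BMat a) (K : BMat bc) (B : BMat b) (C : BMat c)
    (hbc : bc = b * c) (h : IsKron K B C) :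
    IsKron (kron X K) (kron X B) C := by
  subst hbc
  intro i₁ j₁ i₂ j₂ h₁ h₂ h₃ h₄ hI hJ
  -- decompose i₁ = u*b+v, j₁ = u'*b+v'
  obtain ⟨u, v, hv, rfl⟩ : ∃ u v, v < b ∧ i₁ = u * b + v :=
    ⟨i₁ / b, i₁ % b, Nat.mod_lt _ hb, by rw [Nat.div_add_mod']⟩
  obtain ⟨u', v', hv', rfl⟩ : ∃ u v, v < b ∧ j₁ = u * b + v :=
    ⟨j₁ / b, j₁ % b, Nat.mod_lt _ hb, by rw [Nat.div_add_mod']⟩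
  have hu : u < a := by
    by_contra hcon
    push_neg at hcon
    have : a * b ≤ u * b := Nat.mul_le_mul_right _ hcon
    omega
  have hu' : u' < a := by
    by_contra hcon
    push_neg at hcon
    have : a * b ≤ u' * b := Nat.mul_le_mul_right _ hcon
    omega
  have hvc : v * c + i₂ < b * c := by
    have : (v + 1) * c ≤ b * c := Nat.mul_le_mul_right _ hv
    nlinarith
  have hvc' : v' * c + j₂ < b * c := by
    have : (v' + 1) * c ≤ b * c := Nat.mul_le_mul_right _ hv'
    nlinarith
  have eIdx : (u * b + v) * c + i₂ = u * (b * c) + (v * c + i₂) := by ring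
  have eJdx : (u' * b + v') * c + j₂ = u' * (b * c) + (v' * c + j₂) := by ring
  have ediv : ((u * b + v) * c + i₂) / (b * c) = u := by
    rw [eIdx, Nat.add_comm, Nat.add_mul_div_right _ _ (Nat.mul_pos hb hc),
      Nat.div_eq_of_lt hvc, Nat.zero_add]
  have ediv' : ((u' * b + v') * c + j₂) / (b * c) = u' := by
    rw [eJdx, Nat.add_comm, Nat.add_mul_div_right _ _ (Nat.mul_pos hb hc),
      Nat.div_eq_of_lt hvc', Nat.zero_add]
  have emod : ((u * b + v) * c + i₂) % (b * c) = v * c + i₂ := by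
    rw [eIdx, Nat.add_comm, Nat.add_mul_mod_self_right, Nat.mod_eq_of_lt hvc]
  have emod' : ((u' * b + v') * c + j₂) % (b * c) = v' * c + j₂ := by
    rw [eJdx, Nat.add_comm, Nat.add_mul_mod_self_right, Nat.mod_eq_of_lt hvc']
  rw [kron_apply X K _ _ hI hJ (by rw [ediv]; exact hu) (by rw [ediv']; exact hu')
      (by rw [emod]; exact hvc) (by rw [emod']; exact hvc')]
  have du : (u * b + v) / b = u := by
    rw [Nat.add_comm, Nat.add_mul_div_right _ _ hb, Nat.div_eq_of_lt hv, Nat.zero_add]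
  have du' : (u' * b + v') / b = u' := by
    rw [Nat.add_comm, Nat.add_mul_div_right _ _ hb, Nat.div_eq_of_lt hv', Nat.zero_add]
  have dv : (u * b + v) % b = v := by
    rw [Nat.add_comm, Nat.add_mul_mod_self_right, Nat.mod_eq_of_lt hv]
  have dv' : (u' * b + v') % b = v' := by
    rw [Nat.add_comm, Nat.add_mul_mod_self_right, Nat.mod_eq_of_lt hv']
  rw [kron_apply X B _ _ h₁ h₂
      (by rw [du]; exact hu) (by rw [du']; exact hu')
      (by rw [dv]; exact hv) (by rw [dv']; exact hv')]
  rw [ecg X _ _ hu hu' ediv ediv', ecg K _ _ hvc hvc' emod emod',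
      h v v' i₂ j₂ hv hv' h₃ h₄ hvc hvc',
      ecg X _ _ hu hu' du du', ecg B _ _ hv hv' dv dv', Bool.and_assoc]
lemma splits_of_kronList :
    ∀ (ns : List ℕ), (∀ x ∈ ns, 0 < x) →
    ∀ (F : (i : Fin ns.length) → BMat (ns.get i)) (k : ℕ), k ≤ ns.length →
      ∃ (B : BMat ((ns.take k).prod)) (C : BMat ((ns.drop k).prod)),
        IsKron (kronList ns F) B C := by
  intro ns
  induction ns with
  | nil =>
    intro _ F k hk
    have : k = 0 := by simpa using hk
    subst this
    exact ⟨Matrix.of fun _ _ => true, kronList [] F, isKron_one_left _⟩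
  | cons a t ih =>
    intro hpos F k hk
    cases k with
    | zero =>
      exact ⟨Matrix.of fun _ _ => true, kronList (a :: t) F, isKron_one_left _⟩
    | succ k =>
      obtain ⟨B, C, h⟩ := ih (fun x hx => hpos x (List.mem_cons_of_mem _ hx))
        (fun i => F i.succ) k (by simpa using hk)
      have hb : 0 < (t.take k).prod := by
        apply List.prod_pos
        intro x hx
        exact hpos x (List.mem_cons_of_mem _ (List.mem_of_mem_take hx))
      have hc : 0 < (t.drop k).prod := by
        apply List.prod_pos
        intro x hx
        exact hpos x (List.mem_cons_of_mem _ (List.mem_of_mem_drop hx))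
      have hbc : t.prod = (t.take k).prod * (t.drop k).prod := by
        rw [← List.prod_append, List.take_append_drop]
      exact ⟨kron (F ⟨0, Nat.succ_pos _⟩) B, C,
        isKron_assoc hb hc (F ⟨0, Nat.succ_pos _⟩) (kronList t fun i => F i.succ) B C hbc h⟩

lemma key {a b c M N : ℕ} (hb : 0 < b) (hc : 0 < c)
    {A : BMat N} {B : BMat a} {C : BMat M} {B' : BMat (a * b)} {C' : BMat c}
    (hM : M = b * c) (hN : N = a * M)
    (h1 : IsKron A B C) (h2 : IsKron A B' C')
    (x0 y0 : Fin N) (hA : A x0 y0 = true) :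
    ∃ D : BMat b, IsKron C D C' := by
  subst hM; subst hN
  have hM0 : 0 < b * c := Nat.mul_pos hb hc
  obtain ⟨α, ρ, hρ, hxval⟩ : ∃ u s, s < b * c ∧ (x0 : ℕ) = u * (b * c) + s :=
    ⟨(x0 : ℕ) / (b * c), (x0 : ℕ) % (b * c), Nat.mod_lt _ hM0, (Nat.div_add_mod' _ _).symm⟩
  obtain ⟨α', ρ', hρ', hyval⟩ : ∃ u s, s < b * c ∧ (y0 : ℕ) = u * (b * c) + s :=
    ⟨(y0 : ℕ) / (b * c), (y0 : ℕ) % (b * c), Nat.mod_lt _ hM0, (Nat.div_add_mod' _ _).symm⟩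
  have hαa : α < a := by
    by_contra hcon
    push_neg at hcon
    have h5 : a * (b * c) ≤ α * (b * c) := Nat.mul_le_mul_right _ hcon
    have := x0.2
    omega
  have hαa' : α' < a := by
    by_contra hcon
    push_neg at hcon
    have h5 : a * (b * c) ≤ α' * (b * c) := Nat.mul_le_mul_right _ hcon
    have := y0.2
    omega
  have hbnd : ∀ u, u < b → ∀ β, β < a → β * b + u < a * b := by
    intro u hu β hβ
    have : (β + 1) * b ≤ a * b := Nat.mul_le_mul_right _ hβ
    nlinarith
  have hIbnd : α * (b * c) + ρ < a * (b * c) := by rw [← hxval]; exact x0.2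
  have hJbnd : α' * (b * c) + ρ' < a * (b * c) := by rw [← hyval]; exact y0.2
  have hx := h1 α α' ρ ρ' hαa hαa' hρ hρ' hIbnd hJbnd
  have hAx : A ⟨α * (b * c) + ρ, hIbnd⟩ ⟨α' * (b * c) + ρ', hJbnd⟩ = true := by
    rw [ecg A hIbnd hJbnd x0.2 y0.2 hxval.symm hyval.symm]
    exact hA
  rw [hAx] at hx
  obtain ⟨hBt, hCt⟩ := Bool.and_eq_true_iff.mp hx.symm
  refine ⟨Matrix.of fun (u v : Fin b) =>
    B' ⟨α * b + u.1, hbnd u.1 u.2 α hαa⟩ ⟨α' * b + v.1, hbnd v.1 v.2 α' hαa'⟩, ?_⟩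
  intro u v w z hu hv hw hz hUW hVZ
  have hIb : α * (b * c) + (u * c + w) < a * (b * c) := by
    have : (α + 1) * (b * c) ≤ a * (b * c) := Nat.mul_le_mul_right _ hαa
    nlinarith
  have hJb : α' * (b * c) + (v * c + z) < a * (b * c) := by
    have : (α' + 1) * (b * c) ≤ a * (b * c) := Nat.mul_le_mul_right _ hαa'
    nlinarith
  have hIb2 : (α * b + u) * c + w < a * (b * c) := by
    have e : (α * b + u) * c + w = α * (b * c) + (u * c + w) := by ring
    rw [e]; exact hIb
  have hJb2 : (α' * b + v) * c + z < a * (b * c) := by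
    have e : (α' * b + v) * c + z = α' * (b * c) + (v * c + z) := by ring
    rw [e]; exact hJb
  calc C ⟨u * c + w, hUW⟩ ⟨v * c + z, hVZ⟩
      = (B ⟨α, hαa⟩ ⟨α', hαa'⟩ && C ⟨u * c + w, hUW⟩ ⟨v * c + z, hVZ⟩) := by
        rw [hBt, Bool.true_and]
    _ = A ⟨α * (b * c) + (u * c + w), hIb⟩ ⟨α' * (b * c) + (v * c + z), hJb⟩ :=
        (h1 α α' (u * c + w) (v * c + z) hαa hαa' hUW hVZ hIb hJb).symm
    _ = A ⟨(α * b + u) * c + w, hIb2⟩ ⟨(α' * b + v) * c + z, hJb2⟩ :=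
        ecg A hIb hJb hIb2 hJb2 (by ring) (by ring)
    _ = (B' ⟨α * b + u, hbnd u hu α hαa⟩ ⟨α' * b + v, hbnd v hv α' hαa'⟩ &&
          C' ⟨w, hw⟩ ⟨z, hz⟩) :=
        h2 (α * b + u) (α' * b + v) w z (hbnd u hu α hαa) (hbnd v hv α' hαa') hw hz hIb2 hJb2
lemma eq_kron_of_isKron' {m n : ℕ} (hn : 0 < n) {A : BMat (m * n)} {B : BMat m}
    {C : BMat n} (h : IsKron A B C) : A = kron B C := by
  have h2 := eq_kron_of_isKron hn rfl h
  rwa [castK_eq_self] at h2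

lemma main : ∀ (ns : List ℕ), ns ≠ [] → (∀ x ∈ ns, 0 < x) →
    ∀ A : BMat ns.prod,
    (∀ k, k ≤ ns.length →
      ∃ (B : BMat ((ns.take k).prod)) (C : BMat ((ns.drop k).prod)), IsKron A B C) →
    ∃ F, A = kronList ns F := by
  intro ns
  induction ns with
  | nil => intro h; exact absurd rfl h
  | cons a t ih =>
    intro _ hpos A H
    by_cases hz : ∀ i j, A i j = false
    · refine ⟨Fin.cases (Matrix.of fun _ _ => false) (fun i => Matrix.of fun _ _ => true), ?_⟩
      ext i j
      rw [hz i j]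
      rfl
    · push_neg at hz
      obtain ⟨x0, y0, hxy⟩ := hz
      have htrue : A x0 y0 = true := by revert hxy; cases A x0 y0 <;> simp
      have tpos : 0 < t.prod :=
        List.prod_pos fun x hx => hpos x (List.mem_cons_of_mem _ hx)
      obtain ⟨B, C, h1⟩ := H 1 (by simp)
      have h1' : IsKron A (castK (mul_one a) B) C := isKron_castB (mul_one a) h1
      rcases eq_or_ne t [] with rfl | ht
      · -- base case: single factor
        refine ⟨Fin.cases (castK (mul_one a) B) (fun i => i.elim0), ?_⟩
        have hx2 : (x0 : ℕ) < a * 1 := x0.2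
        have hy2 : (y0 : ℕ) < a * 1 := y0.2
        have h1'' : IsKron (N := a * 1) (m := a) (n := 1) A (castK (mul_one a) B) C := h1'
        have h0 := h1'' x0.1 y0.1 0 0 (by omega) (by omega) Nat.one_pos Nat.one_pos
          (by omega) (by omega)
        have hAx : A ⟨(x0 : ℕ) * 1 + 0, by omega⟩ ⟨(y0 : ℕ) * 1 + 0, by omega⟩ = true := by
          rw [ecg A _ _ x0.2 y0.2 (by omega) (by omega)]
          exact htrue
        replace h0 := (h0.symm.trans hAx).symm
        obtain ⟨-, hC0⟩ := Bool.and_eq_true_iff.mp h0.symm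
        have hC : C = (Matrix.of fun _ _ => true : BMat 1) := by
          ext i j
          have hi : i = ⟨0, Nat.one_pos⟩ := Fin.ext (Nat.lt_one_iff.mp i.2)
          have hj : j = ⟨0, Nat.one_pos⟩ := Fin.ext (Nat.lt_one_iff.mp j.2)
          rw [hi, hj]
          exact hC0
        rw [eq_kron_of_isKron' Nat.one_pos h1', hC]
        rfl
      · have H' : ∀ k, k ≤ t.length →
            ∃ (D : BMat ((t.take k).prod)) (E : BMat ((t.drop k).prod)), IsKron C D E := by
          intro k hk
          obtain ⟨B', C', h2⟩ := H (k + 1) (by simpa using hk)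
          have hb : 0 < (t.take k).prod :=
            List.prod_pos fun x hx =>
              hpos x (List.mem_cons_of_mem _ (List.mem_of_mem_take hx))
          have hc : 0 < (t.drop k).prod :=
            List.prod_pos fun x hx =>
              hpos x (List.mem_cons_of_mem _ (List.mem_of_mem_drop hx))
          have hM : t.prod = (t.take k).prod * (t.drop k).prod := by
            rw [← List.prod_append, List.take_append_drop]
          obtain ⟨D, hD⟩ := key hb hc hM rfl h1' h2 x0 y0 htrue
          exact ⟨D, C', hD⟩
        obtain ⟨F', hF'⟩ := ih ht (fun x hx => hpos x (List.mem_cons_of_mem _ hx)) C H'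
        refine ⟨Fin.cases (castK (mul_one a) B) F', ?_⟩
        have hAeq : A = kron (castK (mul_one a) B) C := eq_kron_of_isKron' tpos h1'
        rw [hAeq, hF']
        rfl

/-- `A` admits all the factorizations
`(p₁⋯p_k·l, p_{k+1}⋯p_q·r)` for `k = 0, …, q` iff it admits an
`(l, p₁, …, p_q, r)` factorization. -/
theorem branch_factorizations (l r : ℕ) (P : List ℕ) (hl : 1 < l) (hr : 1 < r)
    (hP : ∀ x ∈ P, 1 < x) (A : BMat (l * P.prod * r)) :
    (∀ k ≤ P.length,
        ∃ (B : BMat ((P.take k).prod * l)) (C : BMat ((P.drop k).prod * r)),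
          A = castK (show (P.take k).prod * l * ((P.drop k).prod * r) = l * P.prod * r by
            have h : (P.take k).prod * (P.drop k).prod = P.prod := by
              rw [← List.prod_append, List.take_append_drop]
            rw [← h]; ring) (kron B C)) ↔
      ∃ F, A = castK (show (l :: (P ++ [r])).prod = l * P.prod * r by
          simp [List.prod_append, mul_assoc]) (kronList (l :: (P ++ [r])) F) := by
  set ns := l :: (P ++ [r]) with hns
  have hnspos : ∀ x ∈ ns, 0 < x := by
    intro x hx
    rw [hns] at hx
    rcases List.mem_cons.mp hx with rfl | hx
    · omega
    · rcases List.mem_append.mp hx with hx | hx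
      · exact lt_trans Nat.zero_lt_one (hP x hx)
      · have : x = r := List.mem_singleton.mp hx
        omega
  have hlen : ns.length = P.length + 2 := by simp [hns]
  have e : ns.prod = l * P.prod * r := by
    simp [hns, List.prod_append, mul_assoc]
  -- size computations for split at j+1 (0 ≤ j ≤ P.length)
  have eB : ∀ j ≤ P.length, (ns.take (j + 1)).prod = (P.take j).prod * l := by
    intro j hj
    rw [hns, List.take_succ_cons, List.prod_cons, List.take_append_of_le_length hj,
      mul_comm]
  have eC : ∀ j ≤ P.length, (ns.drop (j + 1)).prod = (P.drop j).prod * r := by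
    intro j hj
    rw [hns, List.drop_succ_cons, List.drop_append_of_le_length hj, List.prod_append,
      List.prod_cons, List.prod_nil, mul_one]
  have hposC : ∀ j, 0 < (P.drop j).prod * r := by
    intro j
    have : 0 < (P.drop j).prod :=
      List.prod_pos fun x hx => lt_trans Nat.zero_lt_one (hP x (List.mem_of_mem_drop hx))
    positivity
  constructor
  · -- hard direction
    intro h
    set A' : BMat ns.prod := castK e.symm A with hA'
    have hAA : A = castK e A' := (castK_castK e.symm A).symm
    have H : ∀ k, k ≤ ns.length →
        ∃ (B : BMat ((ns.take k).prod)) (C : BMat ((ns.drop k).prod)), IsKron A' B C := by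
      intro k hk
      cases k with
      | zero => exact ⟨Matrix.of fun _ _ => true, A', isKron_one_left A'⟩
      | succ j =>
        by_cases hj : j ≤ P.length
        · obtain ⟨B, C, hBC⟩ := h j hj
          have hN : (P.take j).prod * l * ((P.drop j).prod * r) = l * P.prod * r := by
            have h2 : (P.take j).prod * (P.drop j).prod = P.prod := by
              rw [← List.prod_append, List.take_append_drop]
            rw [← h2]; ring
          have hK : IsKron A B C := isKron_of_eq (hposC j) hN hBC
          have hK' : IsKron A' B C := isKron_castA e.symm hK
          exact ⟨castK (eB j hj).symm B, castK (eC j hj).symm C,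
            isKron_castC (eC j hj).symm (isKron_castB (eB j hj).symm hK')⟩
        · have hj2 : j + 1 = ns.length := by omega
          have eB2 : ns.prod = (ns.take (j + 1)).prod := by rw [hj2, List.take_length]
          have eC2 : (1 : ℕ) = (ns.drop (j + 1)).prod := by rw [hj2, List.drop_length]; rfl
          exact ⟨castK eB2 A', castK eC2 (Matrix.of fun _ _ => true),
            isKron_castC eC2 (isKron_castB eB2 (isKron_one_right A'))⟩
    obtain ⟨F, hF⟩ := main ns (by simp [hns]) hnspos A' H
    exact ⟨F, by rw [hAA, hF]⟩
  · -- easy direction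
    rintro ⟨F, hF⟩ k hk
    obtain ⟨B₀, C₀, hK⟩ := splits_of_kronList ns hnspos F (k + 1) (by omega)
    have hK' : IsKron A B₀ C₀ := by
      rw [show A = castK e (kronList ns F) from hF]
      exact isKron_castA e hK
    have hK'' : IsKron A (castK (eB k hk) B₀) (castK (eC k hk) C₀) :=
      isKron_castC (eC k hk) (isKron_castB (eB k hk) hK')
    have hN : (P.take k).prod * l * ((P.drop k).prod * r) = l * P.prod * r := by
      have h2 : (P.take k).prod * (P.drop k).prod = P.prod := by
        rw [← List.prod_append, List.take_append_drop]
      rw [← h2]; ring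
    exact ⟨castK (eB k hk) B₀, castK (eC k hk) C₀,
      eq_kron_of_isKron (hposC k) hN hK''⟩
end KronPaper
end

section
/- Let A ∈ {0,1}^{n×n} be nonzero and admit an (n₁,n₂) factorization A = A₁ ⊗ A₂. Then the right factor A₂ is decomposable (i.e., A₂ = P ⊗ Â₂ for some binary matrices P, Â₂ of sizes > 1) if and only if A admits an (n̂₁, n̂₂) factorization with n̂₂ a proper nontrivial divisor of n₂ (i.e., 1 < n̂₂ < n₂ and n̂₂ ∣ n₂). -/
namespace KronPaper

lemma kron_apply_s9 {m n : ℕ} (A : BMat m) (B : BMat n) (hn : 0 < n) (i j : Fin (m * n)) :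
    kron A B i j =
      (A ⟨i.val / n, Nat.div_lt_of_lt_mul (lt_of_lt_of_eq i.isLt (mul_comm m n))⟩
        ⟨j.val / n, Nat.div_lt_of_lt_mul (lt_of_lt_of_eq j.isLt (mul_comm m n))⟩
      && B ⟨i.val % n, Nat.mod_lt _ hn⟩ ⟨j.val % n, Nat.mod_lt _ hn⟩) := rfl

lemma castK_apply_s9 {m n : ℕ} (h : m = n) (M : BMat m) (i j : Fin n) :
    castK h M i j = M ⟨i.val, h ▸ i.isLt⟩ ⟨j.val, h ▸ j.isLt⟩ := rfl

lemma app_congr {n : ℕ} (M : BMat n) {x x' y y' : ℕ} (hx : x = x') (hy : y = y')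
    {h1 : x < n} {h2 : x' < n} {h3 : y < n} {h4 : y' < n} :
    M ⟨x, h1⟩ ⟨y, h3⟩ = M ⟨x', h2⟩ ⟨y', h4⟩ := by subst hx; subst hy; rfl

/-- for a nonzero `A = A₁ ⊗ A₂`, the right factor `A₂` is decomposable
iff `A` admits an `(n̂₁, n̂₂)` factorization with `n̂₂` a proper nontrivial divisor
of `n₂`. -/
theorem right_factor_decomposable_iff (n₁ n₂ : ℕ) (h₁ : 1 < n₁) (h₂ : 1 < n₂)
    (A₁ : BMat n₁) (A₂ : BMat n₂)
    (hnz : ∃ i j, kron A₁ A₂ i j = true) :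
    (∃ p r, 1 < p ∧ 1 < r ∧
        ∃ (h : p * r = n₂) (P : BMat p) (Q : BMat r), A₂ = castK h (kron P Q)) ↔
      ∃ a b, 1 < a ∧ 1 < b ∧ b < n₂ ∧ b ∣ n₂ ∧
        ∃ (h : a * b = n₁ * n₂) (B : BMat a) (C : BMat b),
          kron A₁ A₂ = castK h (kron B C) := by
  have hn₂ : 0 < n₂ := lt_trans one_pos h₂
  constructor
  · rintro ⟨p, r, hp, hr, hpr, P, Q, hA₂⟩
    have hrpos : 0 < r := lt_trans one_pos hr
    have hppos : 0 < p := lt_trans one_pos hp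
    have hab : (n₁ * p) * r = n₁ * n₂ := by rw [mul_assoc, hpr]
    refine ⟨n₁ * p, r, ?_, hr, ?_, ⟨p, by rw [← hpr, mul_comm]⟩, hab, kron A₁ P, Q, ?_⟩
    · exact lt_of_lt_of_le h₁ (Nat.le_mul_of_pos_right _ hppos)
    · calc r = 1 * r := (one_mul r).symm
        _ < p * r := (Nat.mul_lt_mul_right hrpos).mpr hp
        _ = n₂ := hpr
    · have g1 : ∀ x : ℕ, x / n₂ = x / r / p := fun x => by
        rw [Nat.div_div_eq_div_mul, mul_comm r p, hpr]
      have g2 : ∀ x : ℕ, x % n₂ / r = x / r % p := fun x => by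
        rw [← hpr, mul_comm p r, Nat.mod_mul_right_div_self]
      have g3 : ∀ x : ℕ, x % n₂ % r = x % r := fun x =>
        Nat.mod_mod_of_dvd x ⟨p, by rw [← hpr, mul_comm]⟩
      ext i j
      rw [kron_apply_s9 A₁ A₂ hn₂, castK_apply_s9, kron_apply_s9 _ _ hrpos, kron_apply_s9 _ _ hppos,
        hA₂, castK_apply_s9, kron_apply_s9 _ _ hrpos, Bool.and_assoc]
      congr 1
      · exact app_congr A₁ (g1 i.val) (g1 j.val)
      congr 1
      · exact app_congr P (g2 i.val) (g2 j.val)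
      · exact app_congr Q (g3 i.val) (g3 j.val)
  · rintro ⟨a, b, ha, hb, hbn, hdvd, hab, B, C, hA⟩
    have hbpos : 0 < b := lt_trans one_pos hb
    obtain ⟨q, hq⟩ := hdvd
    have hq' : q * b = n₂ := by rw [mul_comm]; exact hq.symm
    have hqpos : 0 < q := Nat.pos_of_ne_zero (fun h => by rw [h, mul_zero] at hq; omega)
    have hq1 : 1 < q := by
      rcases Nat.lt_or_ge 1 q with h | h
      · exact h
      · have hq1' : q = 1 := le_antisymm h hqpos
        rw [hq1', mul_one] at hq; omega
    have haq : a = n₁ * q := by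
      have hmul : a * b = (n₁ * q) * b := by rw [hab, mul_assoc, hq']
      exact Nat.eq_of_mul_eq_mul_right hbpos hmul
    obtain ⟨i0, j0, hi0⟩ := hnz
    rw [kron_apply_s9 A₁ A₂ hn₂, Bool.and_eq_true] at hi0
    set i₁ : ℕ := i0.val / n₂ with hi₁def
    set j₁ : ℕ := j0.val / n₂ with hj₁def
    have hi₁ : i₁ < n₁ := Nat.div_lt_of_lt_mul (lt_of_lt_of_eq i0.isLt (mul_comm n₁ n₂))
    have hj₁ : j₁ < n₁ := Nat.div_lt_of_lt_mul (lt_of_lt_of_eq j0.isLt (mul_comm n₁ n₂))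
    have hbound : ∀ u x : ℕ, x < n₁ → u < q → x * q + u < a := by
      intro u x hx hu
      rw [haq]
      calc x * q + u < x * q + q := by omega
        _ = (x + 1) * q := by ring
        _ ≤ n₁ * q := Nat.mul_le_mul_right q hx
    refine ⟨q, b, hq1, hb, hq',
      Matrix.of fun u v => B ⟨i₁ * q + u.val, hbound u.val i₁ hi₁ u.isLt⟩
        ⟨j₁ * q + v.val, hbound v.val j₁ hj₁ v.isLt⟩, C, ?_⟩
    ext s t
    rw [castK_apply_s9, kron_apply_s9 _ _ hbpos]
    simp only [Matrix.of_apply]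
    have hs : s.val < n₂ := s.isLt
    have ht : t.val < n₂ := t.isLt
    have hilt : i₁ * n₂ + s.val < n₁ * n₂ := by
      calc i₁ * n₂ + s.val < i₁ * n₂ + n₂ := by omega
        _ = (i₁ + 1) * n₂ := by ring
        _ ≤ n₁ * n₂ := Nat.mul_le_mul_right n₂ hi₁
    have hjlt : j₁ * n₂ + t.val < n₁ * n₂ := by
      calc j₁ * n₂ + t.val < j₁ * n₂ + n₂ := by omega
        _ = (j₁ + 1) * n₂ := by ring
        _ ≤ n₁ * n₂ := Nat.mul_le_mul_right n₂ hj₁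
    have key := congrFun (congrFun hA ⟨i₁ * n₂ + s.val, hilt⟩) ⟨j₁ * n₂ + t.val, hjlt⟩
    rw [kron_apply_s9 A₁ A₂ hn₂, castK_apply_s9, kron_apply_s9 _ _ hbpos] at key
    have e1 : (i₁ * n₂ + s.val) / n₂ = i₁ := by
      rw [add_comm, Nat.add_mul_div_right _ _ hn₂, Nat.div_eq_of_lt hs, zero_add]
    have e2 : (i₁ * n₂ + s.val) % n₂ = s.val := by
      rw [Nat.add_comm (i₁ * n₂) s.val, Nat.add_mul_mod_self_right, Nat.mod_eq_of_lt hs]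
    have e3 : (j₁ * n₂ + t.val) / n₂ = j₁ := by
      rw [add_comm, Nat.add_mul_div_right _ _ hn₂, Nat.div_eq_of_lt ht, zero_add]
    have e4 : (j₁ * n₂ + t.val) % n₂ = t.val := by
      rw [Nat.add_comm (j₁ * n₂) t.val, Nat.add_mul_mod_self_right, Nat.mod_eq_of_lt ht]
    have e5 : (i₁ * n₂ + s.val) / b = i₁ * q + s.val / b := by
      calc (i₁ * n₂ + s.val) / b = (s.val + (i₁ * q) * b) / b := by
            rw [mul_assoc, hq', Nat.add_comm (i₁ * n₂) s.val]
        _ = s.val / b + i₁ * q := Nat.add_mul_div_right _ _ hbpos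
        _ = i₁ * q + s.val / b := Nat.add_comm _ _
    have e6 : (i₁ * n₂ + s.val) % b = s.val % b := by
      calc (i₁ * n₂ + s.val) % b = (s.val + (i₁ * q) * b) % b := by
            rw [mul_assoc, hq', Nat.add_comm (i₁ * n₂) s.val]
        _ = s.val % b := Nat.add_mul_mod_self_right _ _ _
    have e7 : (j₁ * n₂ + t.val) / b = j₁ * q + t.val / b := by
      calc (j₁ * n₂ + t.val) / b = (t.val + (j₁ * q) * b) / b := by
            rw [mul_assoc, hq', Nat.add_comm (j₁ * n₂) t.val]
        _ = t.val / b + j₁ * q := Nat.add_mul_div_right _ _ hbpos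
        _ = j₁ * q + t.val / b := Nat.add_comm _ _
    have e8 : (j₁ * n₂ + t.val) % b = t.val % b := by
      calc (j₁ * n₂ + t.val) % b = (t.val + (j₁ * q) * b) % b := by
            rw [mul_assoc, hq', Nat.add_comm (j₁ * n₂) t.val]
        _ = t.val % b := Nat.add_mul_mod_self_right _ _ _
    simp only [e1, e2, e3, e4, e5, e6, e7, e8, Fin.eta] at key
    have hA1 : A₁ ⟨i₁, hi₁⟩ ⟨j₁, hj₁⟩ = true := hi0.1
    simp only [hA1, Bool.true_and] at key
    exact key

end KronPaper
end
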